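/- Let d ≥ 0, c ≥ 1 and n ≥ d + c + 1. Let T be a family of subsets of P = {1,…,n} with the following property: for every two repositories on P with K = ∅, U = ∅, at most d defective packages, and at most c weakly-conflicting pairs of non-defective packages each, if every query in T receives identical feedback under both repositories then the two repositories have the same weak-conflict relation. Then T is an (n, d+c−1, 2)-cover-free family. -/

import Mathlib

/-- A software repository on package set `Fin n`: known dependencies `K`,
unknown dependencies `U`, conflicts `C` (unordered pairs of distinct packages),
and broken packages `B`. -/
structure Repo (n : ℕ) where
  K : Finset (Fin n × Fin n)
  U : Finset (Fin n × Fin n)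
  C : Finset (Sym2 (Fin n))
  B : Finset (Fin n)
  hC : ∀ s ∈ C, ¬ s.IsDiag

/-- An installation `I` is successful if it avoids broken packages, is closed
under all (known and unknown) dependencies, and contains no conflicting pair. -/
def Successful {n : ℕ} (R : Repo n) (I : Finset (Fin n)) : Prop :=
  Disjoint I R.B ∧
  (∀ e ∈ R.K ∪ R.U, e.1 ∈ I → e.2 ∈ I) ∧
  (∀ s ∈ R.C, ¬ ∀ x ∈ s, x ∈ I)

/-- A package is defective if no successful installation contains it. -/
def Defective {n : ℕ} (R : Repo n) (p : Fin n) : Prop :=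
  ∀ I : Finset (Fin n), Successful R I → p ∉ I

/-- The set of defective packages. -/
def DefSet {n : ℕ} (R : Repo n) : Set (Fin n) := {p | Defective R p}

/-- Two packages weakly conflict if no successful installation contains both. -/
def WeakConflict {n : ℕ} (R : Repo n) (p q : Fin n) : Prop :=
  ∀ I : Finset (Fin n), Successful R I → ¬ (p ∈ I ∧ q ∈ I)

/-- `p` weakly depends on `q` if every successful installation containing `p`
also contains `q`. -/
def WeakDep {n : ℕ} (R : Repo n) (p q : Fin n) : Prop :=
  ∀ I : Finset (Fin n), Successful R I → p ∈ I → q ∈ I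

/-- The weakly-conflicting pairs of non-defective packages (each unordered pair
counted once via `<`). -/
def WeakConflictPairs {n : ℕ} (R : Repo n) : Set (Fin n × Fin n) :=
  {pq | pq.1 < pq.2 ∧ ¬ Defective R pq.1 ∧ ¬ Defective R pq.2 ∧
    WeakConflict R pq.1 pq.2}

/-- `(n,a,b)`-cover-free family. -/
def IsCFF (n a b : ℕ) (T : Finset (Finset (Fin n))) : Prop :=
  ∀ S₁ S₂ : Finset (Fin n), Disjoint S₁ S₂ → S₁.card = a → S₂.card = b →
    ∃ v ∈ T, Disjoint v S₁ ∧ S₂ ⊆ v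

/-- The `(≤a, ≤b)`-covering property. -/
def CoveringLE (n a b : ℕ) (F : Finset (Finset (Fin n))) : Prop :=
  ∀ S₁ S₂ : Finset (Fin n), Disjoint S₁ S₂ → S₁.card ≤ a →
    1 ≤ S₂.card → S₂.card ≤ b → ∃ v ∈ F, Disjoint v S₁ ∧ S₂ ⊆ v

/-- The digraph of known dependencies is acyclic. -/
def Acyclic {n : ℕ} (K : Finset (Fin n × Fin n)) : Prop :=
  ∀ p : Fin n, ¬ Relation.TransGen (fun x y => (x, y) ∈ K) p p

open Classical in
/-- The `K`-closure of `v`: everything reachable from `v` along `K`-edges. -/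
noncomputable def kclosure {n : ℕ} (K : Finset (Fin n × Fin n))
    (v : Finset (Fin n)) : Finset (Fin n) :=
  Finset.univ.filter
    (fun p => ∃ q ∈ v, Relation.ReflTransGen (fun x y => (x, y) ∈ K) q p)

/-- `Sset R T p`: the queries of `T` that are successful installations
containing `p`. -/
def Sset {n : ℕ} (R : Repo n) (T : Finset (Finset (Fin n))) (p : Fin n) :
    Set (Finset (Fin n)) :=
  {t | t ∈ T ∧ Successful R t ∧ p ∈ t}


/-- Any non-adaptive query family solving Full Learning of weak conflicts with
at most `d` defects, at most `c` weakly-conflicting pairs of non-defective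
packages, and all dependencies known, is an `(n, d+c-1, 2)`-cover-free
family. -/
lemma sym2_subset_pair {n : ℕ} {s : Sym2 (Fin n)} (hd : ¬ s.IsDiag)
    {x y : Fin n} (h : ∀ z ∈ s, z ∈ ({x, y} : Finset (Fin n))) :
    s = s(x, y) := by
  revert hd h
  induction s using Sym2.ind with
  | _ a b =>
    intro hd h
    have ha := h a (by simp); have hb := h b (by simp)
    simp only [Finset.mem_insert, Finset.mem_singleton] at ha hb
    rw [Sym2.mk_isDiag_iff] at hd
    rcases ha with rfl | rfl <;> rcases hb with rfl | rfl <;>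
      first | exact absurd rfl hd | rfl | exact Sym2.eq_swap

lemma successful_pair {n : ℕ} (R : Repo n) (hK : R.K = ∅) (hU : R.U = ∅)
    {x y : Fin n} (hx : x ∉ R.B) (hy : y ∉ R.B)
    (hc : s(x, y) ∉ R.C) : Successful R ({x, y} : Finset (Fin n)) := by
  refine ⟨?_, ?_, ?_⟩
  · rw [Finset.disjoint_left]
    intro a ha
    rcases Finset.mem_insert.mp ha with rfl | ha
    · exact hx
    · rw [Finset.mem_singleton] at ha; subst ha; exact hy
  · intro e he; rw [hK, hU] at he; simp at he
  · intro s hs hall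
    have := sym2_subset_pair (R.hC s hs) hall
    subst this
    exact hc hs

lemma defective_iff {n : ℕ} (R : Repo n) (hK : R.K = ∅) (hU : R.U = ∅)
    (x : Fin n) : Defective R x ↔ x ∈ R.B := by
  constructor
  · intro h; by_contra hx
    have hs : Successful R {x} := by
      refine ⟨by simp [Finset.disjoint_left, hx], ?_, ?_⟩
      · intro e he; rw [hK, hU] at he; simp at he
      · intro s hs hall
        apply R.hC s hs
        revert hall
        induction s using Sym2.ind with
        | _ a b =>
          intro hall
          have ha := hall a (by simp); have hb := hall b (by simp)
          rw [Finset.mem_singleton] at ha hb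
          rw [Sym2.mk_isDiag_iff, ha, hb]
    exact h {x} hs (by simp)
  · intro hx I hI hxI
    exact (Finset.disjoint_left.mp hI.1 hxI) hx

lemma weakConflict_of_mem {n : ℕ} (R : Repo n) {x y : Fin n}
    (h : s(x, y) ∈ R.C) : WeakConflict R x y := by
  intro I hI hxy
  refine hI.2.2 _ h (fun z hz => ?_)
  rcases Sym2.mem_iff.mp hz with rfl | rfl
  exacts [hxy.1, hxy.2]

lemma defSet_ncard {n : ℕ} (R : Repo n) (hK : R.K = ∅) (hU : R.U = ∅) :
    (DefSet R).ncard = R.B.card := by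
  have : DefSet R = ↑R.B := by
    ext x; simp [DefSet, defective_iff R hK hU]
  rw [this, Set.ncard_coe_finset]

lemma wcp_ncard_le {n : ℕ} (R : Repo n) (hK : R.K = ∅) (hU : R.U = ∅) :
    (WeakConflictPairs R).ncard ≤ R.C.card := by
  rw [← Set.ncard_coe_finset]
  refine Set.ncard_le_ncard_of_injOn (fun pq => s(pq.1, pq.2)) ?_ ?_
    R.C.finite_toSet
  · rintro ⟨x, y⟩ ⟨hlt, hdx, hdy, hwc⟩
    simp only [Finset.mem_coe]
    by_contra hmem
    rw [defective_iff R hK hU] at hdx hdy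
    have hs := successful_pair R hK hU hdx hdy hmem
    exact hwc _ hs ⟨by simp, by simp⟩
  · rintro ⟨x, y⟩ ⟨hlt, -⟩ ⟨x', y'⟩ ⟨hlt', -⟩ heq
    simp only [Sym2.eq, Sym2.rel_iff', Prod.mk.injEq, Prod.swap_prod_mk] at heq
    rcases heq with ⟨rfl, rfl⟩ | ⟨rfl, rfl⟩
    · rfl
    · exact absurd (hlt.trans hlt') (lt_irrefl _)

theorem full_learning_conflicts_CFF_lower_bound (n d c : ℕ) (hc : 1 ≤ c)
    (hn : d + c + 1 ≤ n) (T : Finset (Finset (Fin n)))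
    (hT : ∀ R₁ R₂ : Repo n,
      R₁.K = ∅ → R₂.K = ∅ → R₁.U = ∅ → R₂.U = ∅ →
      (DefSet R₁).ncard ≤ d → (DefSet R₂).ncard ≤ d →
      (WeakConflictPairs R₁).ncard ≤ c → (WeakConflictPairs R₂).ncard ≤ c →
      (∀ t ∈ T, Successful R₁ t ↔ Successful R₂ t) →
      (∀ p q : Fin n, WeakConflict R₁ p q ↔ WeakConflict R₂ p q)) :
    IsCFF n (d + c - 1) 2 T := by
  intro S₁ S₂ hdisj h1 h2
  by_contra hcon
  push_neg at hcon
  obtain ⟨p, q, hpq, rfl⟩ := Finset.card_eq_two.mp h2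
  have hpS₁ : p ∉ S₁ := fun h =>
    (Finset.disjoint_left.mp hdisj h) (by simp)
  have hqS₁ : q ∉ S₁ := fun h =>
    (Finset.disjoint_left.mp hdisj h) (by simp)
  obtain ⟨D, hDsub, hDcard⟩ := Finset.exists_subset_card_eq (s := S₁) (n := d) (by omega)
  set E := S₁ \ D with hE
  have hEcard : E.card = c - 1 := by
    rw [hE, Finset.card_sdiff_of_subset hDsub, h1, hDcard]; omega
  set C₂ : Finset (Sym2 (Fin n)) := E.image (fun e => s(e, p)) with hC₂def
  set C₁ : Finset (Sym2 (Fin n)) := insert s(p, q) C₂ with hC₁def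
  have hEsub : E ⊆ S₁ := Finset.sdiff_subset
  have hC₂nd : ∀ s ∈ C₂, ¬ s.IsDiag := by
    intro s hs
    obtain ⟨e, he, rfl⟩ := Finset.mem_image.mp hs
    rw [Sym2.mk_isDiag_iff]
    exact fun h => hpS₁ (h ▸ hEsub he)
  have hC₁nd : ∀ s ∈ C₁, ¬ s.IsDiag := by
    intro s hs
    rcases Finset.mem_insert.mp hs with rfl | hs
    · rw [Sym2.mk_isDiag_iff]; exact hpq
    · exact hC₂nd s hs
  set R₁ : Repo n := ⟨∅, ∅, C₁, D, hC₁nd⟩ with hR₁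
  set R₂ : Repo n := ⟨∅, ∅, C₂, D, hC₂nd⟩ with hR₂
  -- cardinality of C₂ and C₁
  have hpqC₂ : s(p, q) ∉ C₂ := by
    intro h
    obtain ⟨e, he, heq⟩ := Finset.mem_image.mp h
    rw [Sym2.eq, Sym2.rel_iff', Prod.mk.injEq, Prod.swap_prod_mk,
      Prod.mk.injEq] at heq
    rcases heq with ⟨h1', h2'⟩ | ⟨h1', h2'⟩
    · exact hpS₁ (h1' ▸ hEsub he)
    · exact hqS₁ (h1' ▸ hEsub he)
  have hC₂card : C₂.card ≤ c - 1 := by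
    rw [hC₂def]
    exact le_trans (Finset.card_image_le) (le_of_eq hEcard)
  have hC₁card : C₁.card ≤ c := by
    rw [hC₁def, Finset.card_insert_of_notMem hpqC₂]
    omega
  -- feedback agreement
  have hfeed : ∀ t ∈ T, Successful R₁ t ↔ Successful R₂ t := by
    intro t ht
    constructor
    · rintro ⟨hB, hKU, hCc⟩
      exact ⟨hB, hKU, fun s hs => hCc s (Finset.mem_insert_of_mem hs)⟩
    · rintro ⟨hB, hKU, hCc⟩
      refine ⟨hB, hKU, fun s hs => ?_⟩
      rcases Finset.mem_insert.mp hs with rfl | hs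
      · intro hall
        have hp : p ∈ t := hall p (by simp)
        have hq : q ∈ t := hall q (by simp)
        have hsub : ({p, q} : Finset (Fin n)) ⊆ t := by
          intro z hz
          rcases Finset.mem_insert.mp hz with rfl | hz
          · exact hp
          · rw [Finset.mem_singleton] at hz; subst hz; exact hq
        have hnd := hcon t ht
        have : ¬ Disjoint t S₁ := fun h => hnd h hsub
        rw [Finset.not_disjoint_iff] at this
        obtain ⟨x, hxt, hxS₁⟩ := this
        by_cases hxD : x ∈ D
        · exact (Finset.disjoint_left.mp hB hxt) hxD
        · have hxE : x ∈ E := Finset.mem_sdiff.mpr ⟨hxS₁, hxD⟩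
          refine hCc s(x, p) (Finset.mem_image_of_mem _ hxE) (fun z hz => ?_)
          rcases Sym2.mem_iff.mp hz with rfl | rfl
          exacts [hxt, hp]
      · exact hCc s hs
  -- apply hT
  have hKeq : R₁.K = ∅ := rfl
  have key := hT R₁ R₂ rfl rfl rfl rfl
    (by rw [defSet_ncard R₁ rfl rfl]; show D.card ≤ d; omega)
    (by rw [defSet_ncard R₂ rfl rfl]; show D.card ≤ d; omega)
    (le_trans (wcp_ncard_le R₁ rfl rfl) hC₁card)
    (le_trans (wcp_ncard_le R₂ rfl rfl) (le_trans hC₂card (by omega)))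
    hfeed
  have hw₁ : WeakConflict R₁ p q :=
    weakConflict_of_mem R₁ (Finset.mem_insert_self _ _)
  have hw₂ : WeakConflict R₂ p q := (key p q).mp hw₁
  have hpD : p ∉ D := fun h => hpS₁ (hDsub h)
  have hqD : q ∉ D := fun h => hqS₁ (hDsub h)
  have hpqC₂' : s(p, q) ∉ R₂.C := hpqC₂
  have hs : Successful R₂ ({p, q} : Finset (Fin n)) :=
    successful_pair R₂ rfl rfl hpD hqD hpqC₂'
  exact hw₂ _ hs ⟨by simp, by simp⟩
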